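/- arXiv:1712.02570 — 2 statements merged into one kernel-verified Lean document; each statement's English description precedes it below -/
import Mathlib

section
/- If U is a connected subset of a topological space X and S ⊆ X × Q satisfies: (y,0) ∈ S for all y ∈ U, and for every (y,s) ∈ S with y ∈ U the segment {(y,t·s) : t∈[0,1]} lies in S, then (U × Q) ∩ S is connected. -/
/-- If `U` is a connected subset of `X` and `S ⊆ X × Q` contains `(y,0)` for
every `y ∈ U` and with each point `(y,s) ∈ S`, `y ∈ U`, contains the segment
`{(y, t•s) : t ∈ [0,1]}`, then `(U × Q) ∩ S` is connected. -/
theorem slab_connected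
    {X : Type*} [TopologicalSpace X]
    (Q : Set (ℕ → ℝ)) (hQ : Q = {x | ∀ n, x n ∈ Set.Icc (0 : ℝ) 1})
    (U : Set X) (hU : IsConnected U)
    (S : Set (X × (ℕ → ℝ)))
    (hS0 : ∀ y ∈ U, ((y, (0 : ℕ → ℝ)) : X × (ℕ → ℝ)) ∈ S)
    (hseg : ∀ p ∈ S, p.1 ∈ U → ∀ t ∈ Set.Icc (0 : ℝ) 1, (p.1, t • p.2) ∈ S) :
    IsConnected ((U ×ˢ Q) ∩ S) := by
  obtain ⟨y0, hy0⟩ := hU.nonempty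
  set T : Set (X × (ℕ → ℝ)) := (U ×ˢ Q) ∩ S with hT
  set A : Set (X × (ℕ → ℝ)) := (fun y => (y, (0 : ℕ → ℝ))) '' U with hA
  have hAconn : IsPreconnected A :=
    (hU.image _ (Continuous.continuousOn (by continuity))).isPreconnected
  have h0Q : (0 : ℕ → ℝ) ∈ Q := by
    rw [hQ]; intro n; exact ⟨le_refl _, zero_le_one⟩
  have hAsub : A ⊆ T := by
    rintro _ ⟨y, hy, rfl⟩
    exact ⟨⟨hy, h0Q⟩, hS0 y hy⟩
  set C : X × (ℕ → ℝ) → Set (X × (ℕ → ℝ)) :=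
    fun p => (fun t : ℝ => (p.1, t • p.2)) '' Set.Icc 0 1 with hC
  have hCconn : ∀ p, IsPreconnected (C p) := fun p =>
    (isPreconnected_Icc.image _ (Continuous.continuousOn (by continuity)))
  have hCsub : ∀ p ∈ T, C p ⊆ T := by
    rintro p ⟨⟨hpU, hpQ⟩, hpS⟩ _ ⟨t, ht, rfl⟩
    refine ⟨⟨hpU, ?_⟩, hseg p hpS hpU t ht⟩
    rw [hQ] at hpQ ⊢
    intro n
    exact ⟨mul_nonneg ht.1 (hpQ n).1, mul_le_one₀ ht.2 (hpQ n).1 (hpQ n).2⟩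
  have key : T = ⋃₀ ((fun p => A ∪ C p) '' T) := by
    apply Set.Subset.antisymm
    · intro p hp
      refine ⟨A ∪ C p, ⟨p, hp, rfl⟩, Or.inr ⟨1, ⟨zero_le_one, le_refl _⟩, by simp⟩⟩
    · rintro q ⟨_, ⟨p, hp, rfl⟩, hq⟩
      rcases hq with h | h
      · exact hAsub h
      · exact hCsub p hp h
  constructor
  · exact ⟨(y0, 0), ⟨hy0, h0Q⟩, hS0 y0 hy0⟩
  · rw [key]
    refine isPreconnected_sUnion ((y0, (0 : ℕ → ℝ))) _ ?_ ?_
    · rintro _ ⟨p, hp, rfl⟩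
      exact Or.inl ⟨y0, hy0, rfl⟩
    · rintro _ ⟨p, hp, rfl⟩
      refine IsPreconnected.union (p.1, (0 : ℕ → ℝ)) ?_ ?_ hAconn (hCconn p)
      · exact ⟨p.1, hp.1.1, rfl⟩
      · exact ⟨0, ⟨le_refl _, zero_le_one⟩, by simp⟩
end

section
/- Let 𝒳 = {(x,y) ∈ Q² : y has at most one nonzero coordinate}, and for sequences A = (A_n), B = (B_n) of closed subsets of Q, suppose f : Q → Q is a homeomorphism and σ a permutation of ℕ with f[A_n] = B_{σ(n)} for all n. Then the map (f × h_{σ^{-1}})|_𝒳, where h_τ(y)_n = y_{τ(n)}, is a homeomorphism of 𝒳 onto itself carrying Ξ(A) onto Ξ(B) and Q × {0} onto Q × {0}, where Ξ(C) = {(x,y) ∈ 𝒳 : ∀n, y_n = 0 ∨ x ∈ C_n}. -/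
/-- If `f : Q → Q` is a homeomorphism and `σ` a permutation of `ℕ` with
`f[A n] = B (σ n)` for all `n`, then `(f × h_{σ⁻¹})|𝒳` is a homeomorphism of
`𝒳` onto itself carrying `Ξ(A)` onto `Ξ(B)` and `Q × {0}` onto `Q × {0}`. -/
theorem perm_homeo_transfers
    (𝒳 : Set ((ℕ → unitInterval) × (ℕ → unitInterval)))
    (h𝒳 : 𝒳 = {p | ∀ m n, m ≠ n → (p.2 m : ℝ) = 0 ∨ (p.2 n : ℝ) = 0})
    (A B : ℕ → Set (ℕ → unitInterval))
    (hA : ∀ n, IsClosed (A n)) (hB : ∀ n, IsClosed (B n))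
    (f : (ℕ → unitInterval) ≃ₜ (ℕ → unitInterval)) (σ : Equiv.Perm ℕ)
    (hf : ∀ n, (⇑f) '' A n = B (σ n))
    (g : (ℕ → unitInterval) × (ℕ → unitInterval) →
         (ℕ → unitInterval) × (ℕ → unitInterval))
    (hg : g = fun p => (f p.1, fun n => p.2 (σ.symm n)))
    (Ξ : (ℕ → Set (ℕ → unitInterval)) →
         Set ((ℕ → unitInterval) × (ℕ → unitInterval)))
    (hΞ : ∀ C, Ξ C = {p | p ∈ 𝒳 ∧ ∀ n, (p.2 n : ℝ) = 0 ∨ p.1 ∈ C n}) :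
    g '' 𝒳 = 𝒳 ∧
    g '' Ξ A = Ξ B ∧
    g '' {p | p ∈ 𝒳 ∧ ∀ n, (p.2 n : ℝ) = 0}
      = {p | p ∈ 𝒳 ∧ ∀ n, (p.2 n : ℝ) = 0} ∧
    ∃ g' : 𝒳 ≃ₜ 𝒳, ∀ p : 𝒳,
      (g' p : (ℕ → unitInterval) × (ℕ → unitInterval))
        = g (p : (ℕ → unitInterval) × (ℕ → unitInterval)) := by
  -- the coordinate-permutation homeomorphism
  set H : (ℕ → unitInterval) ≃ₜ (ℕ → unitInterval) :=
    { toFun := fun y n => y (σ.symm n)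
      invFun := fun y n => y (σ n)
      left_inv := fun y => by funext n; simp
      right_inv := fun y => by funext n; simp
      continuous_toFun := continuous_pi fun n => continuous_apply _
      continuous_invFun := continuous_pi fun n => continuous_apply _ } with hH
  set G : ((ℕ → unitInterval) × (ℕ → unitInterval)) ≃ₜ
      ((ℕ → unitInterval) × (ℕ → unitInterval)) := f.prodCongr H with hGdef
  have hgG : g = ⇑G := by
    funext p
    simp [hg, hGdef, Homeomorph.prodCongr, hH, Prod.map]
  -- x ∈ A n ↔ f x ∈ B (σ n)
  have hfx : ∀ n x, x ∈ A n ↔ f x ∈ B (σ n) := by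
    intro n x
    rw [← hf n]
    constructor
    · exact fun h => ⟨x, h, rfl⟩
    · rintro ⟨z, hz, hzx⟩
      rwa [← f.injective hzx]
  -- membership of 𝒳 under g
  have hmemX : ∀ p, p ∈ 𝒳 → g p ∈ 𝒳 := by
    intro p hp
    rw [h𝒳] at hp ⊢
    intro m n hmn
    rw [hg]
    exact hp _ _ (fun h => hmn (σ.symm.injective h))
  have hmemX' : ∀ p, p ∈ 𝒳 → G.symm p ∈ 𝒳 := by
    intro p hp
    rw [h𝒳] at hp ⊢
    intro m n hmn
    have : G.symm p = (f.symm p.1, fun n => p.2 (σ n)) := by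
      simp [hGdef, Homeomorph.prodCongr, hH, Prod.map]
    rw [this]
    exact hp _ _ (fun h => hmn (σ.injective h))
  have key : ∀ (C D : ℕ → Set (ℕ → unitInterval)),
      (∀ n x, x ∈ C n ↔ f x ∈ D (σ n)) →
      g '' {p | p ∈ 𝒳 ∧ ∀ n, (p.2 n : ℝ) = 0 ∨ p.1 ∈ C n}
        = {p | p ∈ 𝒳 ∧ ∀ n, (p.2 n : ℝ) = 0 ∨ p.1 ∈ D n} := by
    intro C D hCD
    ext p
    constructor
    · rintro ⟨q, ⟨hq𝒳, hq⟩, rfl⟩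
      refine ⟨hmemX q hq𝒳, fun n => ?_⟩
      rw [hg]
      rcases hq (σ.symm n) with h | h
      · exact Or.inl h
      · right
        have := (hCD (σ.symm n) q.1).mp h
        simpa using this
    · rintro ⟨hp𝒳, hp⟩
      refine ⟨G.symm p, ⟨hmemX' p hp𝒳, fun n => ?_⟩, by rw [hgG]; simp⟩
      have hGs : G.symm p = (f.symm p.1, fun n => p.2 (σ n)) := by
        simp [hGdef, Homeomorph.prodCongr, hH, Prod.map]
      rw [hGs]
      rcases hp (σ n) with h | h
      · exact Or.inl h
      · right
        rw [hCD n]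
        simpa using h
  refine ⟨?_, ?_, ?_, ?_⟩
  · -- g '' 𝒳 = 𝒳
    ext p
    constructor
    · rintro ⟨q, hq, rfl⟩; exact hmemX q hq
    · intro hp
      exact ⟨G.symm p, hmemX' p hp, by rw [hgG]; simp⟩
  · rw [hΞ A, hΞ B]; exact key A B hfx
  · have := key (fun _ => ∅) (fun _ => ∅) (by simp)
    simpa using this
  · have hX : G '' 𝒳 = 𝒳 := by
      rw [← hgG]
      ext p
      constructor
      · rintro ⟨q, hq, rfl⟩; exact hmemX q hq
      · intro hp
        exact ⟨G.symm p, hmemX' p hp, by rw [hgG]; simp⟩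
    exact ⟨(G.image 𝒳).trans (Homeomorph.setCongr hX), fun p => by
      rw [hgG]; rfl⟩
end
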